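/- The number of orbits of the cyclic group generated by τ acting on ZMod m × V equals the number of orbits of the cyclic group generated by P acting on V. (Equivalently: the number of connected components of the product digraph C_m^+ ⊗_h Γ equals the number of cycles, including fixed points, in the disjoint cyclic decomposition of P_h.) -/

import Mathlib

/-- With `τ` and `P` as before, the number of orbits of the cyclic group
generated by `τ` acting on `ZMod m × V` equals the number of orbits of the cyclic group
generated by `P` acting on `V`; i.e. the number of connected components of the product
digraph `C_m^+ ⊗_h Γ` equals the number of cycles in the disjoint cyclic decomposition
of `P_h`. -/
theorem card_orbits_tau_eq_card_orbits_P {m : ℕ} (hm : 1 ≤ m) {V : Type*} [Fintype V]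
    [Nonempty V]
    (σ : ZMod m → Equiv.Perm V) (τ : Equiv.Perm (ZMod m × V))
    (hτ : ∀ (i : ZMod m) (x : V), τ (i, x) = (i + 1, σ i x))
    (P : Equiv.Perm V)
    (hP : ∀ x : V, P x = (List.range m).foldl (fun y i => σ (i : ZMod m) y) x) :
    Nat.card (MulAction.orbitRel.Quotient (Subgroup.zpowers τ) (ZMod m × V)) =
      Nat.card (MulAction.orbitRel.Quotient (Subgroup.zpowers P) V) := by
  classical
  haveI : NeZero m := ⟨by omega⟩
  have hτ1 : ∀ z : ZMod m × V, (τ z).1 = z.1 + 1 := by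
    intro z
    have := hτ z.1 z.2
    rw [show ((z.1, z.2) : ZMod m × V) = z from rfl] at this
    rw [this]
  -- first coordinate under natural powers
  have fst_pow : ∀ (k : ℕ) (z : ZMod m × V), ((τ ^ k) z).1 = z.1 + k := by
    intro k
    induction k with
    | zero => intro z; simp
    | succ k ih =>
      intro z
      rw [pow_succ, Equiv.Perm.mul_apply, ih, hτ1]
      push_cast
      ring
  have fst_inv : ∀ z : ZMod m × V, (τ⁻¹ z).1 = z.1 - 1 := by
    intro z
    have : (τ (τ⁻¹ z)).1 = (τ⁻¹ z).1 + 1 := hτ1 _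
    rw [show τ (τ⁻¹ z) = z from τ.apply_symm_apply z] at this
    rw [this]; ring
  -- first coordinate under integer powers
  have fst_zpow : ∀ (n : ℤ) (z : ZMod m × V), ((τ ^ n) z).1 = z.1 + (n : ZMod m) := by
    intro n
    induction n using Int.induction_on with
    | zero => intro z; simp
    | succ k ih =>
      intro z
      rw [show ((k : ℤ) + 1) = 1 + (k : ℤ) by ring, zpow_add, zpow_one,
        Equiv.Perm.mul_apply, hτ1, ih]
      push_cast
      ring
    | pred k ih =>
      intro z
      rw [show (-(k : ℤ) - 1) = (-1) + (-(k:ℤ)) by ring, zpow_add,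
        Equiv.Perm.mul_apply, zpow_neg_one, fst_inv, ih]
      push_cast
      ring
  -- the fold computation
  have pow_fold : ∀ (k : ℕ) (x : V),
      (τ ^ k) ((0 : ZMod m), x)
        = ((k : ZMod m), (List.range k).foldl (fun y i => σ (i : ZMod m) y) x) := by
    intro k
    induction k with
    | zero => intro x; simp
    | succ k ih =>
      intro x
      rw [pow_succ', Equiv.Perm.mul_apply, ih, hτ]
      have hF : (List.range (k+1)).foldl (fun y i => σ (i : ZMod m) y) x
          = σ (k : ZMod m) ((List.range k).foldl (fun y i => σ (i : ZMod m) y) x) := by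
        simp [List.range_succ]
      rw [hF]
      push_cast
      rfl
  have pow_m : ∀ x : V, (τ ^ m) ((0 : ZMod m), x) = ((0 : ZMod m), P x) := by
    intro x
    rw [pow_fold m x, ZMod.natCast_self, hP]
  -- integer powers of τ^m on the zero fiber
  have zpow_m : ∀ (n : ℤ) (x : V),
      (τ ^ ((m : ℤ) * n)) ((0 : ZMod m), x) = ((0 : ZMod m), (P ^ n) x) := by
    intro n
    induction n using Int.induction_on with
    | zero => intro x; simp
    | succ k ih =>
      intro x
      rw [show (m : ℤ) * ((k : ℤ) + 1) = (m : ℤ) * k + (m : ℤ) by ring, zpow_add,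
        Equiv.Perm.mul_apply, zpow_natCast, pow_m, ih]
      have : (P ^ ((k : ℤ) + 1)) x = (P ^ (k : ℤ)) (P x) := by
        rw [show ((k : ℤ) + 1) = (k : ℤ) + 1 from rfl, zpow_add, zpow_one,
          Equiv.Perm.mul_apply]
      rw [this]
    | pred k ih =>
      intro x
      have hinj := (τ ^ m).injective
      apply hinj
      have h1 : (τ ^ m) ((τ ^ ((m : ℤ) * (-(k : ℤ) - 1))) ((0 : ZMod m), x))
          = (τ ^ ((m : ℤ) * (-(k : ℤ)))) ((0 : ZMod m), x) := by
        rw [← zpow_natCast τ m, ← Equiv.Perm.mul_apply, ← zpow_add]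
        congr 2
        ring
      rw [h1, ih, pow_m]
      have hPstep : (P ^ (-(k : ℤ))) x = P ((P ^ (-(k : ℤ) - 1)) x) := by
        rw [← Equiv.Perm.mul_apply, ← zpow_one_add]
        norm_num
      rw [hPstep]
  -- orbit relation characterizations
  have rel_τ : ∀ a b : ZMod m × V,
      (MulAction.orbitRel (Subgroup.zpowers τ) (ZMod m × V)).r a b ↔
        ∃ n : ℤ, (τ ^ n) b = a := by
    intro a b
    constructor
    · intro h
      obtain ⟨g, hg⟩ := h
      obtain ⟨n, hn⟩ := g.2
      exact ⟨n, by have h2 : τ ^ n = (g : Equiv.Perm (ZMod m × V)) := hn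
                   rw [h2]; exact hg⟩
    · rintro ⟨n, hn⟩
      exact ⟨⟨τ ^ n, ⟨n, rfl⟩⟩, hn⟩
  have rel_P : ∀ a b : V,
      (MulAction.orbitRel (Subgroup.zpowers P) V).r a b ↔
        ∃ n : ℤ, (P ^ n) b = a := by
    intro a b
    constructor
    · intro h
      obtain ⟨g, hg⟩ := h
      obtain ⟨n, hn⟩ := g.2
      exact ⟨n, by have h2 : P ^ n = (g : Equiv.Perm V) := hn
                   rw [h2]; exact hg⟩
    · rintro ⟨n, hn⟩
      exact ⟨⟨P ^ n, ⟨n, rfl⟩⟩, hn⟩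
  -- the map on quotients
  let Φ : MulAction.orbitRel.Quotient (Subgroup.zpowers P) V →
      MulAction.orbitRel.Quotient (Subgroup.zpowers τ) (ZMod m × V) :=
    Quotient.lift (fun x => (Quotient.mk'' ((0 : ZMod m), x) :
        MulAction.orbitRel.Quotient (Subgroup.zpowers τ) (ZMod m × V)))
      (by
        intro a b hab
        obtain ⟨n, hn⟩ := (rel_P a b).mp hab
        apply Quotient.sound
        refine (rel_τ _ _).mpr ⟨(m : ℤ) * n, ?_⟩
        rw [zpow_m, hn])
  have hinj : Function.Injective Φ := by
    intro q₁ q₂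
    induction q₁ using Quotient.inductionOn with
    | h x =>
    induction q₂ using Quotient.inductionOn with
    | h y =>
    intro h
    have h' := Quotient.exact h
    obtain ⟨n, hn⟩ := (rel_τ _ _).mp h'
    have hfst : ((0 : ZMod m), x).1 = ((0 : ZMod m), y).1 + (n : ZMod m) := by
      rw [← hn, fst_zpow]
    simp only at hfst
    have hdvd : (m : ℤ) ∣ n := by
      have h0 : (n : ZMod m) = 0 := by
        have := hfst.symm
        simpa using this
      exact (ZMod.intCast_zmod_eq_zero_iff_dvd n m).mp h0
    obtain ⟨q, hq⟩ := hdvd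
    rw [hq, zpow_m] at hn
    apply Quotient.sound
    refine (rel_P _ _).mpr ⟨q, ?_⟩
    exact (Prod.ext_iff.mp hn).2
  have hsurj : Function.Surjective Φ := by
    intro q
    induction q using Quotient.inductionOn with
    | h z =>
    obtain ⟨i, x⟩ := z
    set k : ℕ := m - i.val with hk
    have hval : i.val < m := ZMod.val_lt i
    have hfst0 : ((τ ^ k) (i, x)).1 = 0 := by
      rw [fst_pow]
      have : ((k : ℕ) : ZMod m) = (m : ZMod m) - (i.val : ZMod m) := by
        rw [hk]
        push_cast [Nat.cast_sub (le_of_lt hval)]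
        ring
      rw [this, ZMod.natCast_self, ZMod.natCast_val, ZMod.cast_id]
      ring
    refine ⟨Quotient.mk'' ((τ ^ k) (i, x)).2, ?_⟩
    show Quotient.mk'' ((0 : ZMod m), ((τ ^ k) (i, x)).2) = _
    apply Quotient.sound
    refine (rel_τ _ _).mpr ⟨(k : ℤ), ?_⟩
    rw [zpow_natCast]
    exact Prod.ext hfst0 rfl
  exact (Nat.card_congr (Equiv.ofBijective Φ ⟨hinj, hsurj⟩)).symm
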